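/- Let n, r be positive integers, c, d integers, and B the r×r matrix with diagonal entries c and off-diagonal entries d. Let 𝒹₁ = gcd(c−d, n). Then the number of vectors x ∈ (ℤ/nℤ)^r for which there exists a ∈ ℤ/nℤ with B·x = a·(1,...,1)^T in (ℤ/nℤ)^r equals n · 𝒹₁^{r−1}. -/

import Mathlib

lemma aux_nat_dvd (a n v : ℕ) (hn : 0 < n) :
    n ∣ a * v ↔ (n / Nat.gcd a n) ∣ v := by
  set g := Nat.gcd a n with hg
  have hgpos : 0 < g := Nat.gcd_pos_of_pos_right a hn
  have hga : g ∣ a := Nat.gcd_dvd_left a n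
  have hgn : g ∣ n := Nat.gcd_dvd_right a n
  constructor
  · intro h
    have hco : (Nat.Coprime (n / g) (a / g)) :=
      (Nat.coprime_div_gcd_div_gcd hgpos).symm
    have h2 : n / g ∣ (a / g) * v := by
      obtain ⟨w, hw⟩ := h
      refine ⟨w, Nat.eq_of_mul_eq_mul_left hgpos ?_⟩
      calc g * ((a / g) * v) = (g * (a / g)) * v := by ring
        _ = a * v := by rw [Nat.mul_div_cancel' hga]
        _ = n * w := hw
        _ = (g * (n / g)) * w := by rw [Nat.mul_div_cancel' hgn]
        _ = g * (n / g * w) := by ring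
    exact hco.dvd_of_dvd_mul_left h2
  · rintro ⟨w, hw⟩
    refine ⟨a / g * w, ?_⟩
    calc a * v = a * (n / g * w) := by rw [hw]
      _ = (g * (a / g)) * (n / g) * w := by rw [Nat.mul_div_cancel' hga]; ring
      _ = (g * (n / g)) * (a / g * w) := by ring
      _ = n * (a / g * w) := by rw [Nat.mul_div_cancel' hgn]

lemma aux_card_torsion (n : ℕ) (hn : 0 < n) (e : ℤ) :
    Nat.card {y : ZMod n // (e : ZMod n) * y = 0} = Int.gcd e n := by
  haveI : NeZero n := ⟨hn.ne'⟩
  set g := Int.gcd e n with hg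
  have hgpos : 0 < g := Int.gcd_pos_of_ne_zero_right e (by exact_mod_cast hn.ne')
  have hgn : g ∣ n := Int.natCast_dvd_natCast.mp (Int.gcd_dvd_right e n)
  set m := n / g with hm
  have hmg : m * g = n := Nat.div_mul_cancel hgn
  have hmpos : 0 < m := by
    rcases Nat.eq_zero_or_pos m with h | h
    · rw [h, zero_mul] at hmg; omega
    · exact h
  have hchar : ∀ y : ZMod n, (e : ZMod n) * y = 0 ↔ m ∣ y.val := by
    intro y
    have hy : ((y.val : ℕ) : ZMod n) = y := ZMod.natCast_rightInverse y
    have h1 : (e : ZMod n) * y = ((e * (y.val : ℕ) : ℤ) : ZMod n) := by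
      push_cast [hy]
      ring
    rw [h1, ZMod.intCast_zmod_eq_zero_iff_dvd, ← Int.dvd_natAbs,
      show ((e * (y.val : ℕ) : ℤ)).natAbs = e.natAbs * y.val by
        rw [Int.natAbs_mul, Int.natAbs_natCast],
      Int.natCast_dvd_natCast]
    have : Nat.gcd e.natAbs n = g := rfl
    rw [aux_nat_dvd _ _ _ hn, this]
  have hequiv : {y : ZMod n // (e : ZMod n) * y = 0} ≃ Fin g := by
    refine ⟨fun y => ⟨y.1.val / m, ?_⟩, fun k => ⟨((k.1 * m : ℕ) : ZMod n), ?_⟩, ?_, ?_⟩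
    · rw [Nat.div_lt_iff_lt_mul hmpos, Nat.mul_comm g m, hmg]
      exact ZMod.val_lt y.1
    · rw [hchar, ZMod.val_cast_of_lt]
      · exact dvd_mul_left m k.1
      · calc k.1 * m < g * m := (Nat.mul_lt_mul_right hmpos).mpr k.2
          _ = n := by rw [Nat.mul_comm]; exact hmg
    · intro y
      obtain ⟨w, hw⟩ := (hchar y.1).mp y.2
      apply Subtype.ext
      simp only
      rw [hw, Nat.mul_div_cancel_left w hmpos, Nat.mul_comm w m, ← hw,
        ZMod.natCast_rightInverse y.1]
    · intro k
      apply Fin.ext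
      simp only
      rw [ZMod.val_cast_of_lt, Nat.mul_div_cancel k.1 hmpos]
      calc k.1 * m < g * m := (Nat.mul_lt_mul_right hmpos).mpr k.2
        _ = n := by rw [Nat.mul_comm]; exact hmg
  rw [Nat.card_congr hequiv, Nat.card_eq_fintype_card, Fintype.card_fin]

theorem stmt_2 (n r : ℕ) (hn : 0 < n) (hr : 0 < r) (c d : ℤ)
    (B : Matrix (Fin r) (Fin r) (ZMod n))
    (hB : ∀ i j, B i j = if i = j then (c : ZMod n) else (d : ZMod n)) :
    Nat.card {x : Fin r → ZMod n // ∃ a : ZMod n, B.mulVec x = fun _ => a}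
      = n * (Int.gcd (c - d) n) ^ (r - 1) := by
  set ec : ZMod n := ((c - d : ℤ) : ZMod n) with hec
  have hec' : ec = (c : ZMod n) - (d : ZMod n) := by rw [hec]; push_cast; ring
  set i0 : Fin r := ⟨0, hr⟩ with hi0
  -- compute mulVec
  have hmv : ∀ (x : Fin r → ZMod n) (i : Fin r),
      B.mulVec x i = ec * x i + (d : ZMod n) * ∑ j, x j := by
    intro x i
    simp only [Matrix.mulVec, dotProduct, hB]
    have : ∀ j : Fin r, (if i = j then (c : ZMod n) else (d : ZMod n)) * x j
        = (if i = j then ec * x j else 0) + (d : ZMod n) * x j := by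
      intro j
      by_cases h : i = j <;> simp [h, hec', sub_mul]
    rw [Finset.sum_congr rfl (fun j _ => this j), Finset.sum_add_distrib,
      Finset.sum_ite_eq, Finset.mul_sum]
    simp
  -- characterize the condition
  have hcond : ∀ x : Fin r → ZMod n,
      (∃ a : ZMod n, B.mulVec x = fun _ => a) ↔ ∀ i, ec * x i = ec * x i0 := by
    intro x
    constructor
    · rintro ⟨a, ha⟩ i
      have h1 := congrFun ha i
      have h2 := congrFun ha i0
      rw [hmv] at h1 h2
      have := h1.trans h2.symm
      exact add_right_cancel this
    · intro h
      refine ⟨ec * x i0 + (d : ZMod n) * ∑ j, x j, funext fun i => ?_⟩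
      rw [hmv, h i]
  -- the equivalence
  have hequiv : {x : Fin r → ZMod n // ∃ a : ZMod n, B.mulVec x = fun _ => a}
      ≃ ZMod n × ({i : Fin r // i ≠ i0} → {y : ZMod n // ec * y = 0}) := by
    refine ⟨fun x => (x.1 i0, fun i => ⟨x.1 i.1 - x.1 i0, ?_⟩),
      fun p => ⟨fun i => if h : i = i0 then p.1 else p.1 + (p.2 ⟨i, h⟩).1, ?_⟩, ?_, ?_⟩
    · rw [mul_sub, (hcond x.1).mp x.2 i.1, sub_self]
    · refine (hcond _).mpr fun i => ?_
      by_cases h : i = i0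
      · simp [h]
      · rw [dif_neg h, dif_pos rfl, mul_add, (p.2 ⟨i, h⟩).2, add_zero]
    · intro x
      apply Subtype.ext
      funext i
      by_cases h : i = i0
      · simp [h]
      · simp only [dif_neg h]
        exact add_sub_cancel _ _
    · intro p
      refine Prod.ext ?_ ?_
      · simp
      · funext i
        apply Subtype.ext
        simp only [dif_neg i.2, dif_pos rfl]
        exact add_sub_cancel_left _ _
  rw [Nat.card_congr hequiv, Nat.card_prod, Nat.card_fun, Nat.card_zmod,
    aux_card_torsion n hn (c - d)]
  congr 1
  congr 1
  rw [Nat.card_eq_fintype_card, Fintype.card_subtype_compl, Fintype.card_subtype_eq,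
    Fintype.card_fin]
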